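/- Let n ≥ 2, 0 < k < n, and let μ = (μ_1, μ_2, μ_3) lie in the tetrahedron ⟨v_0, v_k, v_i, v_{i+1}⟩ with k+1 ≤ i ≤ n−1 (where v_j = (j/n,(j/n)²,(j/n)³)), so that μ = π_0 v_0 + π_k v_k + π_i v_i + π_{i+1} v_{i+1} with nonnegative coefficients summing to 1. Then the index i satisfies i ≤ n(nμ_3 − kμ_2)/(nμ_2 − kμ_1) < i+1 whenever π_i + π_{i+1} > 0, i.e., i = ⌊n(nμ_3 − kμ_2)/(nμ_2 − kμ_1)⌋ when the ratio is not an integer equal to i+1. -/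

import Mathlib

set_option maxHeartbeats 800000


/-- Point location: if `μ` lies in the tetrahedron `⟨v₀, v_k, v_i, v_{i+1}⟩` with
`k+1 ≤ i ≤ n-1`, then the ratio `n(nμ₃ - kμ₂)/(nμ₂ - kμ₁)` lies in `[i, i+1]`, and
its floor is `i` unless it equals `i+1`. -/
theorem stmt18 (n k i : ℕ) (hn : 2 ≤ n) (hk0 : 0 < k) (hkn : k < n)
    (hi : k + 1 ≤ i) (hin : i ≤ n - 1)
    (π0 πk πi πi1 : ℝ) (h0 : 0 ≤ π0) (hπk : 0 ≤ πk) (hπi : 0 ≤ πi) (hπi1 : 0 ≤ πi1)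
    (hsum : π0 + πk + πi + πi1 = 1) (hpos : 0 < πi + πi1)
    (μ1 μ2 μ3 : ℝ)
    (hμ : ∀ m ∈ ({1, 2, 3} : Finset ℕ),
      (if m = 1 then μ1 else if m = 2 then μ2 else μ3) =
        π0 * ((0 : ℝ) / n) ^ m + πk * ((k : ℝ) / n) ^ m +
          πi * ((i : ℝ) / n) ^ m + πi1 * (((i : ℝ) + 1) / n) ^ m)
    (hden : 0 < (n : ℝ) * μ2 - (k : ℝ) * μ1) :
    (i : ℝ) ≤ (n : ℝ) * ((n : ℝ) * μ3 - (k : ℝ) * μ2) / ((n : ℝ) * μ2 - (k : ℝ) * μ1) ∧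
      (n : ℝ) * ((n : ℝ) * μ3 - (k : ℝ) * μ2) / ((n : ℝ) * μ2 - (k : ℝ) * μ1) ≤ (i : ℝ) + 1 ∧
      ((n : ℝ) * ((n : ℝ) * μ3 - (k : ℝ) * μ2) / ((n : ℝ) * μ2 - (k : ℝ) * μ1) ≠ (i : ℝ) + 1 →
        ⌊(n : ℝ) * ((n : ℝ) * μ3 - (k : ℝ) * μ2) / ((n : ℝ) * μ2 - (k : ℝ) * μ1)⌋ = (i : ℤ)) := by
  have hn0 : (0 : ℝ) < (n : ℝ) := by positivity
  have hne : (n : ℝ) ≠ 0 := ne_of_gt hn0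
  have h1 := hμ 1 (by simp)
  have h2 := hμ 2 (by simp)
  have h3 := hμ 3 (by simp)
  simp only [if_pos, if_neg, Nat.one_ne_zero] at h1 h2 h3
  norm_num at h1 h2 h3
  set c : ℝ := (i : ℝ) with hc
  set kr : ℝ := (k : ℝ) with hkr
  have hck : kr + 1 ≤ c := by
    rw [hc, hkr]
    exact_mod_cast hi
  have hc0 : 0 < c := lt_of_lt_of_le (by positivity) hck
  set a : ℝ := πi * c * (c - kr) with ha
  set b : ℝ := πi1 * (c + 1) * (c + 1 - kr) with hb
  have ha0 : 0 ≤ a := by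
    apply mul_nonneg (mul_nonneg hπi hc0.le)
    linarith
  have hb0 : 0 ≤ b := by
    apply mul_nonneg (mul_nonneg hπi1 (by linarith))
    linarith
  have hD : (n : ℝ) * μ2 - kr * μ1 = (a + b) / n := by
    rw [h1, h2, ha, hb]; field_simp; ring
  have hN : (n : ℝ) * μ3 - kr * μ2 = (a * c + b * (c + 1)) / n ^ 2 := by
    rw [h2, h3, ha, hb]; field_simp; ring
  have hab : 0 < a + b := by
    rw [hD] at hden
    have := mul_pos hden hn0
    rwa [div_mul_cancel₀ _ hne] at this
  have hR : (n : ℝ) * ((n : ℝ) * μ3 - kr * μ2) / ((n : ℝ) * μ2 - kr * μ1)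
      = (a * c + b * (c + 1)) / (a + b) := by
    rw [hD, hN]
    field_simp
  rw [hR]
  have hle : c ≤ (a * c + b * (c + 1)) / (a + b) := by
    rw [le_div_iff₀ hab]; nlinarith
  have hge : (a * c + b * (c + 1)) / (a + b) ≤ c + 1 := by
    rw [div_le_iff₀ hab]; nlinarith
  refine ⟨hle, hge, fun hne2 => ?_⟩
  have hlt : (a * c + b * (c + 1)) / (a + b) < c + 1 := lt_of_le_of_ne hge hne2
  rw [Int.floor_eq_iff]
  constructor
  · push_cast; exact hle
  · push_cast; exact hlt
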